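/- Let m ≥ 3 and let q ∈ ℂ be a primitive m-th root of unity. Let (K, E, F) be an irreducible representation of U_q(sl(2)) of dimension N ≥ 1. Then the matrix K is diagonalizable over ℂ, and there exists λ ∈ ℂ, λ ≠ 0, such that every eigenvalue of K equals λ·q^p for some integer 0 ≤ p ≤ m−1; consequently ℂ^N is the direct sum of the eigenspaces of K associated to the eigenvalues λ·q^p, p ∈ ℤ/mℤ. -/

import Mathlib

open Matrix

noncomputable section

/-- A representation of `U_q(sl(2))` of dimension `N`: a triple `(K, E, F)` of `N×N`
complex matrices with `K` invertible satisfying the defining relations. -/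
def IsRep (q : ℂ) {N : ℕ} (K E F : Matrix (Fin N) (Fin N) ℂ) : Prop :=
  IsUnit K ∧
  K * E * K⁻¹ = q • E ∧
  K * F * K⁻¹ = q⁻¹ • F ∧
  E * F - F * E = (q - q⁻¹)⁻¹ • (K ^ 2 - K⁻¹ ^ 2)

/-- A subspace invariant under the three matrices `K`, `E`, `F`. -/
def InvariantSub {N : ℕ} (K E F : Matrix (Fin N) (Fin N) ℂ)
    (W : Submodule ℂ (Fin N → ℂ)) : Prop :=
  (∀ v ∈ W, K.mulVec v ∈ W) ∧ (∀ v ∈ W, E.mulVec v ∈ W) ∧ (∀ v ∈ W, F.mulVec v ∈ W)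

/-- An irreducible representation of `U_q(sl(2))` of dimension `N`. -/
def IsIrrep (q : ℂ) {N : ℕ} (K E F : Matrix (Fin N) (Fin N) ℂ) : Prop :=
  IsRep q K E F ∧ 1 ≤ N ∧
  ∀ W : Submodule ℂ (Fin N → ℂ), InvariantSub K E F W → W = ⊥ ∨ W = ⊤

/-- If `q` is a primitive `m`-th root of unity (`m ≥ 3`) and `(K, E, F)` is an irreducible
representation of `U_q(sl(2))` of dimension `N ≥ 1`, then `K` is diagonalizable and there is
`λ ≠ 0` such that every eigenvalue of `K` is of the form `λ·q^p` with `0 ≤ p ≤ m-1`;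
consequently `ℂ^N` is the direct sum of the eigenspaces for `λ·q^p`, `p ∈ ℤ/m`. -/


lemma auxKpowE {N : ℕ} (q : ℂ) (K E : Matrix (Fin N) (Fin N) ℂ)
    (hK : IsUnit K) (hKE : K * E * K⁻¹ = q • E) (n : ℕ) :
    K ^ n * E = q ^ n • (E * K ^ n) := by
  have hinv : K⁻¹ * K = 1 := Matrix.nonsing_inv_mul K ((Matrix.isUnit_iff_isUnit_det K).mp hK)
  have h1 : K * E = q • (E * K) := by
    have := congrArg (· * K) hKE
    simpa [Matrix.mul_assoc, hinv, smul_mul_assoc] using this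
  induction n with
  | zero => simp
  | succ n ih =>
    calc K ^ (n+1) * E = K ^ n * (K * E) := by rw [pow_succ, Matrix.mul_assoc]
    _ = K ^ n * (q • (E * K)) := by rw [h1]
    _ = q • (K ^ n * E * K) := by rw [Matrix.mul_smul, Matrix.mul_assoc]
    _ = q • ((q ^ n • (E * K ^ n)) * K) := by rw [ih]
    _ = q ^ (n+1) • (E * K ^ (n+1)) := by
        rw [smul_mul_assoc, smul_smul, pow_succ, pow_succ, Matrix.mul_assoc, mul_comm q]

lemma auxKpowScalar (m : ℕ) (hm : 3 ≤ m) (q : ℂ) (hq : IsPrimitiveRoot q m)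
    (N : ℕ) (hN : 1 ≤ N) (K E F : Matrix (Fin N) (Fin N) ℂ)
    (hK : IsUnit K) (hKE : K * E * K⁻¹ = q • E) (hKF : K * F * K⁻¹ = q⁻¹ • F)
    (hirr : ∀ W : Submodule ℂ (Fin N → ℂ),
      ((∀ v ∈ W, K.mulVec v ∈ W) ∧ (∀ v ∈ W, E.mulVec v ∈ W) ∧ (∀ v ∈ W, F.mulVec v ∈ W))
      → W = ⊥ ∨ W = ⊤) :
    ∃ c : ℂ, c ≠ 0 ∧ K ^ m = c • (1 : Matrix (Fin N) (Fin N) ℂ) := by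
  haveI : NeZero N := ⟨by omega⟩
  have hm0 : 0 < m := by omega
  have hqm : q ^ m = 1 := hq.pow_eq_one
  have hqm' : (q⁻¹) ^ m = 1 := by rw [inv_pow, hqm, inv_one]
  have hME : K ^ m * E = E * K ^ m := by
    rw [auxKpowE q K E hK hKE m, hqm, one_smul]
  have hMF : K ^ m * F = F * K ^ m := by
    rw [auxKpowE q⁻¹ K F hK hKF m, hqm', one_smul]
  have hMK : K ^ m * K = K * K ^ m := ((Commute.pow_self K m).symm.eq.symm)
  -- eigenvalue of K^m
  set g : Module.End ℂ (Fin N → ℂ) := Matrix.mulVecLin (K ^ m) with hg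
  obtain ⟨c, hc⟩ := Module.End.exists_eigenvalue g
  set W := Module.End.eigenspace g c with hW
  have hmemW : ∀ v, v ∈ W ↔ (K ^ m).mulVec v = c • v := by
    intro v
    rw [hW, Module.End.mem_eigenspace_iff]
    rfl
  have hstep : ∀ (A : Matrix (Fin N) (Fin N) ℂ), K ^ m * A = A * K ^ m →
      ∀ v ∈ W, A.mulVec v ∈ W := by
    intro A hA v hv
    rw [hmemW] at hv ⊢
    rw [Matrix.mulVec_mulVec, hA, ← Matrix.mulVec_mulVec, hv, Matrix.mulVec_smul]
  have : W = ⊥ ∨ W = ⊤ := hirr W ⟨hstep K hMK, hstep E hME, hstep F hMF⟩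
  have hWtop : W = ⊤ := by
    rcases this with h' | h'
    · exact absurd h' hc
    · exact h'
  have hKm : K ^ m = c • (1 : Matrix (Fin N) (Fin N) ℂ) := by
    ext i j
    have := (hmemW (Pi.single j 1)).mp (hWtop ▸ Submodule.mem_top)
    have h2 := congrFun this i
    simpa [Matrix.mulVec_single, Matrix.smul_apply, Pi.single_apply,
      Matrix.one_apply, mul_comm] using h2
  refine ⟨c, ?_, hKm⟩
  intro hc0
  have : IsUnit (K ^ m) := hK.pow m
  rw [hKm, hc0, zero_smul] at this
  exact (not_isUnit_zero : ¬ IsUnit (0 : Matrix (Fin N) (Fin N) ℂ)) this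

theorem stmt0 (m : ℕ) (hm : 3 ≤ m) (q : ℂ) (hq : IsPrimitiveRoot q m)
    (N : ℕ) (hN : 1 ≤ N) (K E F : Matrix (Fin N) (Fin N) ℂ)
    (h : IsIrrep q K E F) :
    (⨆ μ : ℂ, Module.End.eigenspace (Matrix.mulVecLin K) μ) = ⊤ ∧
    ∃ lam : ℂ, lam ≠ 0 ∧
      (∀ μ : ℂ, Module.End.HasEigenvalue (Matrix.mulVecLin K) μ →
        ∃ p : ℕ, p ≤ m - 1 ∧ μ = lam * q ^ p) ∧
      DirectSum.IsInternal
        (fun p : Fin m =>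
          Module.End.eigenspace (Matrix.mulVecLin K) (lam * q ^ (p : ℕ))) := by
  obtain ⟨⟨hK, hKE, hKF, hEF⟩, hN', hirr⟩ := h
  obtain ⟨c, hc, hKm⟩ := auxKpowScalar m hm q hq N hN K E F hK hKE hKF
    (fun W hW => hirr W hW)

  haveI : NeZero m := ⟨by omega⟩
  have hm0 : 0 < m := by omega
  set f : Module.End ℂ (Fin N → ℂ) := Matrix.mulVecLin K with hf
  obtain ⟨lam, hlam⟩ := IsAlgClosed.exists_pow_nat_eq c hm0
  have hlam0 : lam ≠ 0 := by
    intro h0; rw [h0, zero_pow (by omega)] at hlam; exact hc hlam.symm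
  have hpow : ∀ n : ℕ, Matrix.mulVecLin (K ^ n) = f ^ n := by
    intro n; induction n with
    | zero => simp [Matrix.mulVecLin_one]; rfl
    | succ n ih => rw [pow_succ, pow_succ, Matrix.mulVecLin_mul, ih]; rfl
  have hfm : f ^ m = algebraMap ℂ (Module.End ℂ (Fin N → ℂ)) c := by
    rw [← hpow, hKm]
    refine LinearMap.ext fun v => ?_
    rw [Matrix.mulVecLin_apply, Matrix.smul_mulVec, Matrix.one_mulVec,
      Module.algebraMap_end_apply]
  -- semisimplicity / diagonalizability
  have hsep : (Polynomial.X ^ m - Polynomial.C c).Separable :=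
    Polynomial.separable_X_pow_sub_C c (by exact_mod_cast (by omega : m ≠ 0)) hc
  have haev : Polynomial.aeval f (Polynomial.X ^ m - Polynomial.C c) = 0 := by
    rw [map_sub, map_pow, Polynomial.aeval_X, Polynomial.aeval_C, hfm, sub_self]
  have hss : f.IsSemisimple :=
    Module.End.isSemisimple_of_squarefree_aeval_eq_zero hsep.squarefree haev
  have htop' : (⨆ μ : ℂ, Module.End.eigenspace f μ) = ⊤ := by
    have htop := Module.End.iSup_maxGenEigenspace_eq_top f
    rw [← htop]
    exact iSup_congr fun μ =>
      (hss.isFinitelySemisimple.maxGenEigenspace_eq_eigenspace μ).symm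
  -- eigenvalue characterization
  have heig : ∀ μ : ℂ, f.HasEigenvalue μ → μ ^ m = c := by
    intro μ hμ
    obtain ⟨v, hv⟩ := hμ.exists_hasEigenvector
    have h1 : (f ^ m) v = μ ^ m • v := hv.pow_apply m
    have h2 : (f ^ m) v = c • v := by rw [hfm, Module.algebraMap_end_apply]
    have h3 : (μ ^ m - c) • v = 0 := by rw [sub_smul, h1.symm.trans h2, sub_self]
    rcases smul_eq_zero.mp h3 with h4 | h4
    · exact sub_eq_zero.mp h4
    · exact absurd h4 hv.2
  have hchar : ∀ μ : ℂ, f.HasEigenvalue μ → ∃ p : ℕ, p < m ∧ μ = lam * q ^ p := by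
    intro μ hμ
    have h5 : (μ * lam⁻¹) ^ m = 1 := by
      rw [mul_pow, heig μ hμ, inv_pow, hlam, mul_inv_cancel₀ hc]
    obtain ⟨p, hp, hp2⟩ := hq.eq_pow_of_pow_eq_one h5
    refine ⟨p, hp, ?_⟩
    field_simp at hp2
    rw [← hp2]; ring
  refine ⟨htop', lam, hlam0, fun μ hμ => ?_, ?_⟩
  · obtain ⟨p, hp, hp2⟩ := hchar μ hμ
    exact ⟨p, by omega, hp2⟩
  · rw [DirectSum.isInternal_submodule_iff_iSupIndep_and_iSup_eq_top]
    constructor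
    · apply (Module.End.eigenspaces_iSupIndep f).comp
      intro p p' hpp
      have : q ^ (p : ℕ) = q ^ (p' : ℕ) := by
        field_simp at hpp
        simpa only [eq_comm] using hpp
      exact Fin.ext (hq.pow_inj p.2 p'.2 this)
    · rw [← htop']
      apply le_antisymm
      · exact iSup_le fun p => le_iSup _ _
      · refine iSup_le fun μ => ?_
        by_cases hμ : f.HasEigenvalue μ
        · obtain ⟨p, hp, rfl⟩ := hchar μ hμ
          exact le_iSup_of_le ⟨p, hp⟩ le_rfl
        · have hbot : Module.End.eigenspace f μ = ⊥ := not_not.mp hμ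
          rw [hbot]; exact bot_le
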